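/- Let X be a normed space and S ⊆ X* a separating subset (x*(x) = 0 for all x* ∈ S implies x = 0). If S is not contained in any σ-porous subset of X*, then S is norming: the functional N_S(x) = sup{ |x*(x)|/‖x*‖ : x* ∈ S, x* ≠ 0 } is an equivalent norm on X. -/

import Mathlib

open Filter

/-- `A` is a porous subset of the metric space `α` with porosity constant `c`. -/
def Porous {α : Type*} [PseudoMetricSpace α] (A : Set α) (c : ℝ) : Prop :=
  ∀ a ∈ A, ∃ y : ℕ → α, Tendsto y atTop (nhds a) ∧
    ∀ n, Metric.closedBall (y n) (c * dist (y n) a) ∩ A = ∅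

/-- `A` is σ-porous: a countable union of porous sets. -/
def SigmaPorous {α : Type*} [PseudoMetricSpace α] (A : Set α) : Prop :=
  ∃ P : ℕ → Set α, (∀ n, ∃ c : ℝ, 0 < c ∧ c < 1 ∧ Porous (P n) c) ∧ A = ⋃ n, P n

open NormedSpace in
/-- The norming functional associated with a set `S` of functionals. -/
noncomputable def normingFun {X : Type*} [NormedAddCommGroup X] [NormedSpace ℝ X]
    (S : Set (StrongDual ℝ X)) (x : X) : ℝ :=
  sSup {r : ℝ | ∃ x' ∈ S, x' ≠ 0 ∧ r = |x' x| / ‖x'‖}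

open NormedSpace in
lemma normingFun_aux_bdd {X : Type*} [NormedAddCommGroup X] [NormedSpace ℝ X]
    (S : Set (StrongDual ℝ X)) (x : X) :
    ∀ r ∈ {r : ℝ | ∃ x' ∈ S, x' ≠ 0 ∧ r = |x' x| / ‖x'‖}, r ≤ ‖x‖ := by
  rintro r ⟨x', _, hne, rfl⟩
  rw [div_le_iff₀ (norm_pos_iff.mpr hne)]
  calc |x' x| = ‖x' x‖ := (Real.norm_eq_abs _).symm
    _ ≤ ‖x'‖ * ‖x‖ := x'.le_opNorm x
    _ = ‖x‖ * ‖x'‖ := mul_comm _ _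

open NormedSpace in
lemma normingFun_le_norm {X : Type*} [NormedAddCommGroup X] [NormedSpace ℝ X]
    (S : Set (StrongDual ℝ X)) (x : X) : normingFun S x ≤ ‖x‖ :=
  Real.sSup_le (normingFun_aux_bdd S x) (norm_nonneg x)

open NormedSpace in
lemma normingFun_nonneg {X : Type*} [NormedAddCommGroup X] [NormedSpace ℝ X]
    (S : Set (StrongDual ℝ X)) (x : X) : 0 ≤ normingFun S x := by
  apply Real.sSup_nonneg
  rintro r ⟨x', _, hne, rfl⟩
  positivity

set_option synthInstance.maxHeartbeats 1000000 in
set_option maxHeartbeats 2000000 in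
open NormedSpace in
theorem stmt7 {X : Type*} [NormedAddCommGroup X] [NormedSpace ℝ X]
    (S : Set (StrongDual ℝ X))
    (hsep : ∀ x : X, (∀ x' ∈ S, x' x = 0) → x = 0)
    (hnp : ¬ ∃ A : Set (StrongDual ℝ X), SigmaPorous A ∧ S ⊆ A) :
    ∃ α : ℝ, 0 < α ∧ ∀ x : X, α * ‖x‖ ≤ normingFun S x ∧ normingFun S x ≤ ‖x‖ := by
  by_contra hcon
  push_neg at hcon
  -- for each n, get a unit-ish vector badly normed
  have key : ∀ n : ℕ, ∃ v : X, ‖v‖ = 1 ∧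
      ∀ x' ∈ S, |x' v| ≤ ‖x'‖ / ((n : ℝ) + 1) := by
    intro n
    have hα : (0:ℝ) < 1 / ((n : ℝ) + 1) := by positivity
    obtain ⟨x, hx⟩ := hcon (1 / ((n : ℝ) + 1)) hα
    have hfail : ¬ (1 / ((n : ℝ) + 1) * ‖x‖ ≤ normingFun S x) := fun h =>
      absurd (hx h) (not_lt.mpr (normingFun_le_norm S x))
    push_neg at hfail
    have hxne : x ≠ 0 := by
      intro h
      rw [h, norm_zero, mul_zero] at hfail
      exact absurd (normingFun_nonneg S 0) (not_le.mpr hfail)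
    have hxpos : (0:ℝ) < ‖x‖ := norm_pos_iff.mpr hxne
    refine ⟨‖x‖⁻¹ • x, ?_, ?_⟩
    · rw [norm_smul, norm_inv, norm_norm, inv_mul_cancel₀ (ne_of_gt hxpos)]
    · intro x' hx'
      have hb : |x' x| ≤ ‖x'‖ * (‖x‖ / ((n : ℝ) + 1)) := by
        rcases eq_or_ne x' 0 with rfl | hne
        · simp
        · have hmem : |x' x| / ‖x'‖ ∈
              {r : ℝ | ∃ y ∈ S, y ≠ 0 ∧ r = |y x| / ‖y‖} := ⟨x', hx', hne, rfl⟩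
          have hbdd : BddAbove {r : ℝ | ∃ y ∈ S, y ≠ 0 ∧ r = |y x| / ‖y‖} :=
            ⟨‖x‖, normingFun_aux_bdd S x⟩
          have h1 : |x' x| / ‖x'‖ ≤ normingFun S x := le_csSup hbdd hmem
          have h2 : |x' x| / ‖x'‖ ≤ ‖x‖ / ((n : ℝ) + 1) := by
            calc |x' x| / ‖x'‖ ≤ normingFun S x := h1
              _ ≤ 1 / ((n : ℝ) + 1) * ‖x‖ := le_of_lt hfail
              _ = ‖x‖ / ((n : ℝ) + 1) := by ring
          have hx'pos : (0:ℝ) < ‖x'‖ := norm_pos_iff.mpr hne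
          calc |x' x| = |x' x| / ‖x'‖ * ‖x'‖ := by field_simp
            _ ≤ ‖x‖ / ((n : ℝ) + 1) * ‖x'‖ := by
                exact mul_le_mul_of_nonneg_right h2 (norm_nonneg _)
            _ = ‖x'‖ * (‖x‖ / ((n : ℝ) + 1)) := by ring
      have : x' (‖x‖⁻¹ • x) = ‖x‖⁻¹ * x' x := by
        rw [map_smul]; rfl
      rw [this, abs_mul, abs_inv, abs_norm, inv_mul_le_iff₀ hxpos]
      calc |x' x| ≤ ‖x'‖ * (‖x‖ / ((n : ℝ) + 1)) := hb
        _ = ‖x‖ * (‖x'‖ / ((n : ℝ) + 1)) := by ring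
  choose v hv1 hv2 using key
  -- the porous set
  set B : Set (StrongDual ℝ X) := {g | ∀ n : ℕ, |g (v n)| ≤ ‖g‖ / ((n : ℝ) + 1)} with hB
  apply hnp
  refine ⟨B, ⟨fun _ => B, fun _ => ⟨1/4, by norm_num, by norm_num, ?_⟩,
    (Set.iUnion_const B).symm⟩, ?_⟩
  · -- B is porous with constant 1/4
    intro a ha
    -- for each k, produce the hole at scale t = 1/(k+1)
    have hole : ∀ k : ℕ, ∃ y : StrongDual ℝ X, dist y a = 1 / ((k:ℝ)+1) ∧
        Metric.closedBall y ((1/4) * dist y a) ∩ B = ∅ := by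
      intro k
      set t : ℝ := 1 / ((k:ℝ)+1) with ht
      have htpos : 0 < t := by positivity
      -- choose m large
      obtain ⟨m, hm⟩ := exists_nat_gt ((‖a‖ + 2*t) * 4 / (3*t))
      have hmbig : (‖a‖ + 2*t) / ((m:ℝ)+1) < 3*t/4 := by
        rw [div_lt_iff₀ (by positivity)]
        have h1 : (‖a‖ + 2*t) * 4 / (3*t) < (m:ℝ) + 1 := lt_of_lt_of_le hm (by linarith)
        rw [div_lt_iff₀ (by positivity)] at h1
        nlinarith
      -- dual vector for v m
      have hvne : v m ≠ 0 := by
        intro h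
        have h1 := hv1 m
        rw [h, norm_zero] at h1
        exact one_ne_zero h1.symm
      obtain ⟨f, hf1, hf2⟩ := exists_dual_vector ℝ (v m) (norm_ne_zero_iff.mpr hvne)
      have hfvm : f (v m) = 1 := by
        have := hf2
        rw [hv1 m] at this
        simpa using this
      set σ : ℝ := if 0 ≤ a (v m) then 1 else -1 with hσ
      have hσabs : |σ| = 1 := by
        rw [hσ]; split <;> simp
      set y : StrongDual ℝ X := a + (σ * t) • f with hy
      have hdist : dist y a = t := by
        rw [hy, dist_eq_norm]
        simp only [add_sub_cancel_left]
        rw [norm_smul, hf1, mul_one, Real.norm_eq_abs, abs_mul, hσabs, one_mul,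
          abs_of_pos htpos]
      refine ⟨y, hdist, ?_⟩
      rw [hdist]
      ext z
      simp only [Set.mem_inter_iff, Metric.mem_closedBall, Set.mem_empty_iff_false,
        iff_false, not_and]
      intro hzball hzB
      -- estimates
      have hzy : ‖z - y‖ ≤ t/4 := by
        rw [← dist_eq_norm]
        calc dist z y ≤ 1/4 * t := hzball
          _ = t/4 := by ring
      have hzyv : |z (v m) - y (v m)| ≤ t/4 := by
        have : |(z - y) (v m)| ≤ ‖z - y‖ * ‖v m‖ := by
          calc |(z - y) (v m)| = ‖(z - y) (v m)‖ := (Real.norm_eq_abs _).symm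
            _ ≤ ‖z - y‖ * ‖v m‖ := (z - y).le_opNorm _
        rw [hv1 m, mul_one] at this
        have heq : (z - y) (v m) = z (v m) - y (v m) := by simp
        rw [heq] at this
        linarith
      have hyv : t ≤ |y (v m)| := by
        have : y (v m) = a (v m) + σ * t := by
          rw [hy]; simp [hfvm]
        rw [this, hσ]
        split
        · rw [if_pos ‹_›] at *
          rw [abs_of_nonneg (by linarith)]
          linarith
        · rw [abs_of_nonpos (by push_neg at ‹¬ 0 ≤ a (v m)›; linarith)]
          push_neg at ‹¬ 0 ≤ a (v m)›
          linarith
      have hzv : 3*t/4 ≤ |z (v m)| := by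
        have := abs_sub_abs_le_abs_sub (y (v m)) (z (v m))
        have h2 : |y (v m) - z (v m)| = |z (v m) - y (v m)| := abs_sub_comm _ _
        linarith
      have hznorm : ‖z‖ ≤ ‖a‖ + 2*t := by
        have h1 : ‖y‖ ≤ ‖a‖ + t := by
          have he : a + (y - a) = y := by abel
          calc ‖y‖ = ‖a + (y - a)‖ := by rw [he]
            _ ≤ ‖a‖ + ‖y - a‖ := norm_add_le _ _
            _ = ‖a‖ + t := by rw [← dist_eq_norm, hdist]
        have hzeq : z = y + (z - y) := by abel
        calc ‖z‖ = ‖y + (z - y)‖ := by rw [← hzeq]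
          _ ≤ ‖y‖ + ‖z - y‖ := norm_add_le _ _
          _ ≤ ‖a‖ + t + t/4 := by linarith
          _ ≤ ‖a‖ + 2*t := by linarith
      -- contradiction
      have hc : |z (v m)| ≤ ‖z‖ / ((m:ℝ)+1) := hzB m
      have : |z (v m)| ≤ (‖a‖ + 2*t) / ((m:ℝ)+1) := by
        calc |z (v m)| ≤ ‖z‖ / ((m:ℝ)+1) := hc
          _ ≤ (‖a‖ + 2*t) / ((m:ℝ)+1) := by gcongr
      linarith
    choose y hy1 hy2 using hole
    refine ⟨y, ?_, hy2⟩
    rw [tendsto_iff_dist_tendsto_zero]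
    simp only [hy1]
    exact tendsto_one_div_add_atTop_nhds_zero_nat
  · -- S ⊆ B
    intro g hg n
    exact hv2 n g hg
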